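/- Let M be a positive integer, h > 0, and let e, f, R be periodic grid functions satisfying the perturbed reduction relation f_i = δ_x² e_i − (h²/12)·δ_x² f_i + R_i for all i. Then ‖f‖² ≤ (18/h²)·|e|₁² + (9/2)·‖R‖². In particular, if R = 0 then ‖f‖² ≤ (9/h²)·|e|₁². (Estimate (fk) in the proof of Theorem 6.1 and estimate (xi) in the proof of the stability theorem.) -/

import Mathlib

open Finset

namespace BBMB

/-- A periodic grid function with period `M`. -/
def Periodic (M : ℕ) (u : ℤ → ℝ) : Prop := ∀ i : ℤ, u (i + (M : ℤ)) = u i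

/-- Forward difference `δ_x u_{i+1/2} = (u_{i+1} - u_i)/h`. -/
noncomputable def dxp (h : ℝ) (u : ℤ → ℝ) (i : ℤ) : ℝ := (u (i + 1) - u i) / h

/-- Backward difference `δ_x u_{i-1/2} = (u_i - u_{i-1})/h`. -/
noncomputable def dxm (h : ℝ) (u : ℤ → ℝ) (i : ℤ) : ℝ := (u i - u (i - 1)) / h

/-- Second difference `δ_x² u_i = (u_{i+1} - 2 u_i + u_{i-1})/h²`. -/
noncomputable def dxx (h : ℝ) (u : ℤ → ℝ) (i : ℤ) : ℝ :=
  (u (i + 1) - 2 * u i + u (i - 1)) / h ^ 2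

/-- Centered difference `Δ_x u_i = (u_{i+1} - u_{i-1})/(2h)`. -/
noncomputable def Dx (h : ℝ) (u : ℤ → ℝ) (i : ℤ) : ℝ := (u (i + 1) - u (i - 1)) / (2 * h)

/-- Discrete inner product `(u, w) = h ∑_{i=1}^{M} u_i w_i`. -/
noncomputable def ip (M : ℕ) (h : ℝ) (u w : ℤ → ℝ) : ℝ :=
  h * ∑ i ∈ Finset.Icc (1 : ℤ) (M : ℤ), u i * w i

/-- Discrete inner product `⟨δ_x u, δ_x w⟩ = h ∑_{i=1}^{M} (δ_x u_{i-1/2})(δ_x w_{i-1/2})`. -/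
noncomputable def dip (M : ℕ) (h : ℝ) (u w : ℤ → ℝ) : ℝ :=
  h * ∑ i ∈ Finset.Icc (1 : ℤ) (M : ℤ), dxm h u i * dxm h w i

/-- Discrete `L²` norm `‖u‖ = √((u,u))`. -/
noncomputable def nrm (M : ℕ) (h : ℝ) (u : ℤ → ℝ) : ℝ := Real.sqrt (ip M h u u)

/-- Discrete `H¹` seminorm `|u|₁ = √(⟨δ_x u, δ_x u⟩)`. -/
noncomputable def snorm (M : ℕ) (h : ℝ) (u : ℤ → ℝ) : ℝ := Real.sqrt (dip M h u u)

/-- Trilinear term `ψ(u,v)_i = (1/3) (u_i Δ_x v_i + Δ_x (u·v)_i)`. -/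
noncomputable def psi (h : ℝ) (u v : ℤ → ℝ) (i : ℤ) : ℝ :=
  (1 / 3) * (u i * Dx h v i + Dx h (fun j => u j * v j) i)

lemma sum_shift (M : ℕ) (hM : 0 < M) (g : ℤ → ℝ) (hg : ∀ i : ℤ, g (i + (M:ℤ)) = g i) :
    ∑ i ∈ Icc (1:ℤ) (M:ℤ), g (i+1) = ∑ i ∈ Icc (1:ℤ) (M:ℤ), g i := by
  have h1 : (1:ℤ) ≤ M := by exact_mod_cast hM
  have l : ∑ i ∈ Icc (1:ℤ) (M:ℤ), g (i+1) = ∑ i ∈ Icc (2:ℤ) ((M:ℤ)+1), g i := by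
    rw [show ((2:ℤ)) = 1 + 1 by ring, ← map_add_right_Icc, Finset.sum_map]
    simp [addRightEmbedding]
  rw [l]
  have r1 : Finset.Icc (2:ℤ) ((M:ℤ)+1) = insert ((M:ℤ)+1) (Icc 2 (M:ℤ)) := by
    ext x; simp [Finset.mem_Icc]; omega
  have r2 : Finset.Icc (1:ℤ) (M:ℤ) = insert 1 (Icc 2 (M:ℤ)) := by
    ext x; simp [Finset.mem_Icc]; omega
  rw [r1, r2, Finset.sum_insert (by simp), Finset.sum_insert (by simp)]
  have : g ((M:ℤ)+1) = g 1 := by rw [add_comm]; exact hg 1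
  rw [this]

lemma sum_shift_neg (M : ℕ) (hM : 0 < M) (g : ℤ → ℝ) (hg : ∀ i : ℤ, g (i + (M:ℤ)) = g i) :
    ∑ i ∈ Icc (1:ℤ) (M:ℤ), g (i-1) = ∑ i ∈ Icc (1:ℤ) (M:ℤ), g i := by
  have := sum_shift M hM (fun i => g (i-1)) (fun i => by rw [show i + M - 1 = (i-1) + M by ring, hg])
  simpa using this.symm

lemma scalar1 (A b C : ℝ) (hA : 0 ≤ A) (hb : 0 ≤ b) (hC : 0 ≤ C)
    (key : A^2 ≤ 2*b*A + 1/3*A^2 + C*A) :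
    A^2 ≤ 18*b^2 + 9/2*C^2 := by
  nlinarith [sq_nonneg (A - 3*b - 3/2*C), sq_nonneg (3*b - 3/2*C), key]

lemma scalar2 (A b : ℝ) (hA : 0 ≤ A) (hb : 0 ≤ b)
    (key : A^2 ≤ 2*b*A + 1/3*A^2) :
    A^2 ≤ 9*b^2 := by
  nlinarith [sq_nonneg (A - 3*b), key]

lemma ip_self_nonneg (M : ℕ) (h : ℝ) (hh : 0 < h) (u : ℤ → ℝ) : 0 ≤ ip M h u u := by
  unfold ip
  apply mul_nonneg hh.le
  exact Finset.sum_nonneg fun i _ => mul_self_nonneg _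

lemma cs_abs (M : ℕ) (h : ℝ) (hh : 0 < h) (u w : ℤ → ℝ) :
    |ip M h u w| ≤ nrm M h u * nrm M h w := by
  unfold nrm ip
  rw [abs_mul, abs_of_pos hh]
  have su : ∑ i ∈ Icc (1:ℤ) (M:ℤ), u i * u i = ∑ i ∈ Icc (1:ℤ) (M:ℤ), u i ^ 2 := by
    simp [pow_two]
  have sw : ∑ i ∈ Icc (1:ℤ) (M:ℤ), w i * w i = ∑ i ∈ Icc (1:ℤ) (M:ℤ), w i ^ 2 := by
    simp [pow_two]
  have h1 : |∑ i ∈ Icc (1:ℤ) (M:ℤ), u i * w i| ≤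
      Real.sqrt (∑ i ∈ Icc (1:ℤ) (M:ℤ), u i ^2) * Real.sqrt (∑ i ∈ Icc (1:ℤ) (M:ℤ), w i ^2) := by
    rw [← Real.sqrt_mul (Finset.sum_nonneg fun i _ => sq_nonneg _)]
    rw [← Real.sqrt_sq_eq_abs]
    exact Real.sqrt_le_sqrt (Finset.sum_mul_sq_le_sq_mul_sq _ _ _)
  rw [su, sw, Real.sqrt_mul hh.le, Real.sqrt_mul hh.le]
  calc h * |∑ i ∈ Icc (1:ℤ) (M:ℤ), u i * w i|
      ≤ h * (Real.sqrt (∑ i ∈ Icc (1:ℤ) (M:ℤ), u i ^2) * Real.sqrt (∑ i ∈ Icc (1:ℤ) (M:ℤ), w i ^2)) :=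
        mul_le_mul_of_nonneg_left h1 hh.le
    _ = Real.sqrt h * Real.sqrt (∑ i ∈ Icc (1:ℤ) (M:ℤ), u i ^ 2) *
        (Real.sqrt h * Real.sqrt (∑ i ∈ Icc (1:ℤ) (M:ℤ), w i ^ 2)) := by
        conv_lhs => rw [← Real.mul_self_sqrt hh.le]
        ring

lemma dxm_per (M : ℕ) (h : ℝ) (u : ℤ → ℝ) (hu : Periodic M u) : Periodic M (dxm h u) := by
  intro i
  unfold dxm
  rw [show i + (M:ℤ) - 1 = (i-1) + (M:ℤ) by ring, hu, hu]

lemma sbp (M : ℕ) (h : ℝ) (hM : 0 < M) (hh : 0 < h) (u w : ℤ → ℝ)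
    (hu : Periodic M u) (hw : Periodic M w) :
    ip M h (fun i => dxx h u i) w = - dip M h u w := by
  have hne : h ≠ 0 := hh.ne'
  unfold ip dip
  have key : ∀ i : ℤ, dxx h u i * w i
      = (dxm h u (i+1) * w i - dxm h u i * w i) / h := by
    intro i
    unfold dxx dxm
    rw [show i + 1 - 1 = i by ring]
    field_simp
    ring
  have shift : ∑ i ∈ Icc (1:ℤ) (M:ℤ), dxm h u (i+1) * w i
      = ∑ i ∈ Icc (1:ℤ) (M:ℤ), dxm h u i * w (i-1) := by
    have hg : ∀ i : ℤ, (fun j => dxm h u j * w (j-1)) (i + (M:ℤ))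
        = (fun j => dxm h u j * w (j-1)) i := by
      intro i
      simp only []
      rw [dxm_per M h u hu i, show i + (M:ℤ) - 1 = (i-1) + (M:ℤ) by ring, hw]
    have := sum_shift M hM (fun j => dxm h u j * w (j-1)) hg
    simp only [add_sub_cancel_right] at this
    exact this
  calc h * ∑ i ∈ Icc (1:ℤ) (M:ℤ), dxx h u i * w i
      = h * ∑ i ∈ Icc (1:ℤ) (M:ℤ), (dxm h u (i+1) * w i - dxm h u i * w i) / h := by
        congr 1; exact Finset.sum_congr rfl fun i _ => key i
    _ = ∑ i ∈ Icc (1:ℤ) (M:ℤ), dxm h u (i+1) * w i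
        - ∑ i ∈ Icc (1:ℤ) (M:ℤ), dxm h u i * w i := by
        rw [← Finset.sum_div, mul_div_assoc', mul_comm, mul_div_assoc, div_self hne,
          mul_one, Finset.sum_sub_distrib]
    _ = ∑ i ∈ Icc (1:ℤ) (M:ℤ), dxm h u i * w (i-1)
        - ∑ i ∈ Icc (1:ℤ) (M:ℤ), dxm h u i * w i := by rw [shift]
    _ = ∑ i ∈ Icc (1:ℤ) (M:ℤ), (dxm h u i * w (i-1) - dxm h u i * w i) := by
        rw [Finset.sum_sub_distrib]
    _ = ∑ i ∈ Icc (1:ℤ) (M:ℤ), (-h) * (dxm h u i * dxm h w i) := by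
        refine Finset.sum_congr rfl fun i _ => ?_
        unfold dxm
        field_simp
        ring
    _ = -(h * ∑ i ∈ Icc (1:ℤ) (M:ℤ), dxm h u i * dxm h w i) := by
        rw [← Finset.mul_sum]; ring

lemma inverse_est (M : ℕ) (h : ℝ) (hM : 0 < M) (hh : 0 < h) (f : ℤ → ℝ)
    (hf : Periodic M f) :
    dip M h f f ≤ 4 / h^2 * ip M h f f := by
  have h2 : (0:ℝ) < h^2 := by positivity
  have term : ∀ i ∈ Icc (1:ℤ) (M:ℤ), dxm h f i * dxm h f i
      ≤ (2*(f i * f i) + 2*(f (i-1) * f (i-1)))/h^2 := by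
    intro i _
    have e1 : dxm h f i * dxm h f i = (f i - f (i-1))^2 / h^2 := by
      unfold dxm; field_simp
    rw [e1]
    gcongr
    nlinarith [sq_nonneg (f i + f (i-1))]
  unfold dip
  have hS := sum_shift_neg M hM (fun i => f i * f i) (fun i => by rw [hf i])
  calc h * ∑ i ∈ Icc (1:ℤ) (M:ℤ), dxm h f i * dxm h f i
      ≤ h * ∑ i ∈ Icc (1:ℤ) (M:ℤ), (2*(f i * f i) + 2*(f (i-1) * f (i-1)))/h^2 :=
        mul_le_mul_of_nonneg_left (Finset.sum_le_sum term) hh.le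
    _ = 4 / h^2 * ip M h f f := by
        rw [← Finset.sum_div, Finset.sum_add_distrib, ← Finset.mul_sum, ← Finset.mul_sum, hS]
        unfold ip
        field_simp
        ring

/-- Estimate (fk) in the proof of Theorem 6.1, and estimate (xi) of the stability theorem. -/
theorem perturbed_reduction_bound (M : ℕ) (h : ℝ) (e f R : ℤ → ℝ)
    (hM : 0 < M) (hh : 0 < h)
    (he : Periodic M e) (hf : Periodic M f) (hR : Periodic M R)
    (hrel : ∀ i : ℤ, f i = dxx h e i - h ^ 2 / 12 * dxx h f i + R i) :
    (nrm M h f) ^ 2 ≤ 18 / h ^ 2 * (snorm M h e) ^ 2 + 9 / 2 * (nrm M h R) ^ 2 ∧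
      ((∀ i : ℤ, R i = 0) → (nrm M h f) ^ 2 ≤ 9 / h ^ 2 * (snorm M h e) ^ 2) := by
  have h2 : (0:ℝ) < h^2 := by positivity
  set A := nrm M h f with hAdef
  set B := snorm M h e with hBdef
  set C := nrm M h R with hCdef
  have hA0 : 0 ≤ A := Real.sqrt_nonneg _
  have hB0 : 0 ≤ B := Real.sqrt_nonneg _
  have hC0 : 0 ≤ C := Real.sqrt_nonneg _
  have hA2 : A^2 = ip M h f f := Real.sq_sqrt (ip_self_nonneg M h hh f)
  have hC2 : C^2 = ip M h R R := Real.sq_sqrt (ip_self_nonneg M h hh R)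
  -- dip as ip of dxm, snorm as nrm of dxm
  have dipe : dip M h e f = ip M h (dxm h e) (dxm h f) := rfl
  have hBn : B = nrm M h (dxm h e) := rfl
  have hFn : snorm M h f = nrm M h (dxm h f) := rfl
  -- identity
  have hident : ip M h f f = ip M h (fun i => dxx h e i) f
      - h^2/12 * ip M h (fun i => dxx h f i) f + ip M h R f := by
    unfold ip
    have step : ∀ i ∈ Icc (1:ℤ) (M:ℤ), f i * f i
        = dxx h e i * f i - h^2/12 * (dxx h f i * f i) + R i * f i := by
      intro i _
      nth_rewrite 1 [hrel i]
      ring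
    rw [Finset.sum_congr rfl step, Finset.sum_add_distrib, Finset.sum_sub_distrib,
      ← Finset.mul_sum]
    ring
  rw [sbp M h hM hh e f he hf, sbp M h hM hh f f hf hf] at hident
  -- bounds
  have inv := inverse_est M h hM hh f hf
  have bsnf : snorm M h f ≤ 2/h * A := by
    have : dip M h f f ≤ (2/h)^2 * ip M h f f := by
      convert inv using 2
      rw [div_pow]; norm_num
    calc snorm M h f = Real.sqrt (dip M h f f) := rfl
      _ ≤ Real.sqrt ((2/h)^2 * ip M h f f) := Real.sqrt_le_sqrt this
      _ = 2/h * A := by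
          rw [Real.sqrt_mul (sq_nonneg _), Real.sqrt_sq (by positivity)]
          rfl
  have bde : - dip M h e f ≤ B * (2/h * A) := by
    have h1 : - dip M h e f ≤ |dip M h e f| := neg_le_abs _
    have h2' : |dip M h e f| ≤ B * snorm M h f := by
      rw [dipe, hBn, hFn]; exact cs_abs M h hh _ _
    exact h1.trans (h2'.trans (mul_le_mul_of_nonneg_left bsnf hB0))
  have bdf : h^2/12 * dip M h f f ≤ 1/3 * A^2 := by
    have := mul_le_mul_of_nonneg_left inv (by positivity : (0:ℝ) ≤ h^2/12)
    calc h^2/12 * dip M h f f ≤ h^2/12 * (4/h^2 * ip M h f f) := this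
      _ = 1/3 * A^2 := by rw [hA2]; field_simp; ring
  have bRf : ip M h R f ≤ C * A := by
    have h1 : ip M h R f ≤ |ip M h R f| := le_abs_self _
    exact h1.trans (cs_abs M h hh R f)
  have key : A^2 ≤ 2*(B/h)*A + 1/3*A^2 + C*A := by
    have : A^2 ≤ B * (2/h*A) + 1/3*A^2 + C*A := by
      rw [hA2, hident]; linarith
    calc A^2 ≤ B * (2/h*A) + 1/3*A^2 + C*A := this
      _ = 2*(B/h)*A + 1/3*A^2 + C*A := by ring
  constructor
  · have := scalar1 A (B/h) C hA0 (by positivity) hC0 key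
    calc A^2 ≤ 18*(B/h)^2 + 9/2*C^2 := this
      _ = 18/h^2*B^2 + 9/2*C^2 := by field_simp; try ring
  · intro hRz
    have hCz : C = 0 := by
      have : ip M h R R = 0 := by
        simp [ip, hRz]
      rw [hCdef]; unfold nrm; rw [this, Real.sqrt_zero]
    have key2 : A^2 ≤ 2*(B/h)*A + 1/3*A^2 := by
      have := key; rw [hCz] at this; linarith
    have := scalar2 A (B/h) hA0 (by positivity) key2
    calc A^2 ≤ 9*(B/h)^2 := this
      _ = 9/h^2*B^2 := by field_simp; try ring

end BBMB
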